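/- Let (Q_i)_{i=1}^∞ ⊂ [0,1] be a stochastic process such that (Q_i^{-1}) is a supermartingale with respect to a filtration (𝒢_i). Then for any sub-σ-algebra 𝒢_0 ⊆ 𝒢_1 and any T, E[∑_{i=1}^T ∏_{j=1}^i (1 - Q_j) | 𝒢_0] ≤ E[Q_1^{-1} | 𝒢_0] - 1 almost surely. -/

import Mathlib

open MeasureTheory Finset

/-- Let `(Q_i)_{i≥1} ⊂ (0,1]` be a stochastic process such that `(Q_i⁻¹)` is a
supermartingale w.r.t. a filtration `(𝒢_i)`.  Then for any sub-σ-algebra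
`𝒢₀ ⊆ 𝒢₁` and any `T`,
`E[∑_{i=1}^T ∏_{j=1}^i (1 - Q_j) | 𝒢₀] ≤ E[Q₁⁻¹ | 𝒢₀] - 1` a.s. -/
theorem supermartingale_geometric_sum_bound {Ω : Type*} {m0 : MeasurableSpace Ω}
    (μ : Measure Ω) [IsProbabilityMeasure μ]
    (𝒢 : Filtration ℕ m0) (Q : ℕ → Ω → ℝ)
    (hQpos : ∀ i ω, 0 < Q i ω) (hQle : ∀ i ω, Q i ω ≤ 1)
    (hsup : Supermartingale (fun i ω => (Q i ω)⁻¹) 𝒢 μ)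
    (𝒢₀ : MeasurableSpace Ω) (h𝒢₀ : 𝒢₀ ≤ 𝒢 1) (T : ℕ) :
    μ[fun ω => ∑ i ∈ Finset.Icc 1 T, ∏ j ∈ Finset.Icc 1 i, (1 - Q j ω) | 𝒢₀]
      ≤ᵐ[μ] fun ω => (μ[fun ω' => (Q 1 ω')⁻¹ | 𝒢₀]) ω - 1 := by
  -- measurability of `Q i` w.r.t. `𝒢 i`
  have hQmeas : ∀ i, StronglyMeasurable[𝒢 i] (Q i) := by
    intro i
    have h := (hsup.stronglyAdapted i).measurable.inv
    simp only [inv_inv] at h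
    exact (show (fun ω => (Q i ω)⁻¹)⁻¹ = Q i from funext fun ω => inv_inv (Q i ω)) ▸ h.stronglyMeasurable
  have hQm0 : ∀ i, Measurable[m0] (Q i) := fun i =>
    ((hQmeas i).measurable).mono (𝒢.le i) le_rfl
  -- the products lie in `[0,1]`
  have hprod_mem : ∀ (s : Finset ℕ) (g : ℕ → ℕ) ω,
      (∏ j ∈ s, (1 - Q (g j) ω)) ∈ Set.Icc (0:ℝ) 1 := by
    intro s g ω
    constructor
    · exact Finset.prod_nonneg fun j _ => by linarith [hQle (g j) ω]
    · exact Finset.prod_le_one (fun j _ => by linarith [hQle (g j) ω])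
        (fun j _ => by linarith [hQpos (g j) ω])
  -- integrability of the shifted sums
  have hint : ∀ (n k : ℕ),
      Integrable (fun ω => ∑ i ∈ range n, ∏ j ∈ range (i+1), (1 - Q (k+j) ω)) μ := by
    intro n k
    refine Integrable.mono' (integrable_const (n : ℝ)) ?_ ?_
    · refine (Finset.measurable_sum _ fun i _ => Finset.measurable_prod _ fun j _ => ?_).aestronglyMeasurable
      exact (measurable_const.sub (hQm0 (k+j)))
    · refine Filter.Eventually.of_forall fun ω => ?_
      calc ‖∑ i ∈ range n, ∏ j ∈ range (i+1), (1 - Q (k+j) ω)‖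
          ≤ ∑ i ∈ range n, ‖∏ j ∈ range (i+1), (1 - Q (k+j) ω)‖ := norm_sum_le _ _
        _ ≤ ∑ _i ∈ range n, (1:ℝ) := by
            refine Finset.sum_le_sum fun i _ => ?_
            have h := hprod_mem (range (i+1)) (k + ·) ω
            rw [Real.norm_eq_abs, abs_of_nonneg h.1]
            exact h.2
        _ = n := by simp
  -- key induction
  have key : ∀ (n k : ℕ),
      μ[fun ω => ∑ i ∈ range n, ∏ j ∈ range (i+1), (1 - Q (k+j) ω) | 𝒢 k]
        ≤ᵐ[μ] fun ω => (Q k ω)⁻¹ - 1 := by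
    intro n
    induction n with
    | zero =>
      intro k
      simp only [range_zero, Finset.sum_empty]
      rw [show (fun _ : Ω => (0:ℝ)) = (0 : Ω → ℝ) from rfl, condExp_zero]
      refine Filter.Eventually.of_forall fun ω => ?_
      have h1 : (1:ℝ) ≤ (Q k ω)⁻¹ := one_le_inv_iff₀.2 ⟨hQpos k ω, hQle k ω⟩
      simp only [Pi.zero_apply]
      linarith
    | succ n ih =>
      intro k
      -- algebraic identity
      have hid : (fun ω => ∑ i ∈ range (n+1), ∏ j ∈ range (i+1), (1 - Q (k+j) ω))
          = fun ω => (1 - Q k ω) *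
              (1 + ∑ i ∈ range n, ∏ j ∈ range (i+1), (1 - Q (k+1+j) ω)) := by
        funext ω
        have hterm : ∀ i, (∏ j ∈ range (i+1), (1 - Q (k+j) ω))
            = (1 - Q k ω) * ∏ j ∈ range i, (1 - Q (k+1+j) ω) := by
          intro i
          rw [Finset.prod_range_succ']
          simp only [Nat.add_zero]
          rw [mul_comm]
          congr 1
          exact Finset.prod_congr rfl fun j _ => by rw [show k + (j+1) = k+1+j by omega]
        simp only [hterm]
        rw [← Finset.mul_sum, Finset.sum_range_succ']
        simp [add_comm]
      rw [hid]
      -- integrability pieces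
      have hintS : Integrable (fun ω => ∑ i ∈ range n, ∏ j ∈ range (i+1), (1 - Q (k+1+j) ω)) μ :=
        hint n (k+1)
      have hint1S : Integrable (fun ω =>
          (1 + ∑ i ∈ range n, ∏ j ∈ range (i+1), (1 - Q (k+1+j) ω))) μ :=
        (integrable_const 1).add hintS
      have hintprod : Integrable (fun ω => (1 - Q k ω) *
          (1 + ∑ i ∈ range n, ∏ j ∈ range (i+1), (1 - Q (k+1+j) ω))) μ := by
        rw [← hid]; exact hint (n+1) k
      -- pull-out property
      have hpull : μ[(fun ω => (1 - Q k ω)) * (fun ω =>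
            (1 + ∑ i ∈ range n, ∏ j ∈ range (i+1), (1 - Q (k+1+j) ω))) | 𝒢 k]
          =ᵐ[μ] (fun ω => (1 - Q k ω)) * μ[(fun ω =>
            (1 + ∑ i ∈ range n, ∏ j ∈ range (i+1), (1 - Q (k+1+j) ω))) | 𝒢 k] :=
        condExp_mul_of_stronglyMeasurable_left (stronglyMeasurable_const.sub (hQmeas k))
          hintprod hint1S
      have hadd : μ[(fun ω =>
            (1 + ∑ i ∈ range n, ∏ j ∈ range (i+1), (1 - Q (k+1+j) ω))) | 𝒢 k]
          =ᵐ[μ] (fun _ => (1:ℝ)) + μ[(fun ω =>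
            ∑ i ∈ range n, ∏ j ∈ range (i+1), (1 - Q (k+1+j) ω)) | 𝒢 k] := by
        refine (condExp_add (μ := μ) (m := 𝒢 k) (integrable_const (1:ℝ)) hintS).trans ?_
        rw [condExp_const (𝒢.le k) (1:ℝ) (μ := μ)]
      -- tower property
      have htower : μ[(fun ω =>
            ∑ i ∈ range n, ∏ j ∈ range (i+1), (1 - Q (k+1+j) ω)) | 𝒢 k]
          =ᵐ[μ] μ[μ[(fun ω =>
            ∑ i ∈ range n, ∏ j ∈ range (i+1), (1 - Q (k+1+j) ω)) | 𝒢 (k+1)] | 𝒢 k] :=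
        (condExp_condExp_of_le (𝒢.mono (Nat.le_succ k)) (𝒢.le (k+1))).symm
      -- apply induction hypothesis through `condexp_mono`
      have hmono : μ[μ[(fun ω =>
            ∑ i ∈ range n, ∏ j ∈ range (i+1), (1 - Q (k+1+j) ω)) | 𝒢 (k+1)] | 𝒢 k]
          ≤ᵐ[μ] μ[fun ω => (Q (k+1) ω)⁻¹ - 1 | 𝒢 k] :=
        condExp_mono integrable_condExp
          ((hsup.integrable (k+1)).sub (integrable_const 1)) (ih (k+1))
      have hsub : μ[fun ω => (Q (k+1) ω)⁻¹ - 1 | 𝒢 k]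
          =ᵐ[μ] fun ω => (μ[fun ω' => (Q (k+1) ω')⁻¹ | 𝒢 k]) ω - 1 := by
        refine (condExp_sub (μ := μ) (m := 𝒢 k) (hsup.integrable (k+1))
          (integrable_const (1:ℝ))).trans ?_
        rw [condExp_const (𝒢.le k) (1:ℝ) (μ := μ)]
        exact Filter.Eventually.of_forall fun ω => rfl
      have hsmart : μ[fun ω' => (Q (k+1) ω')⁻¹ | 𝒢 k] ≤ᵐ[μ] fun ω => (Q k ω)⁻¹ :=
        hsup.2.1 k (k+1) (Nat.le_succ k)
      filter_upwards [hpull, hadd, htower, hmono, hsub, hsmart]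
        with ω e1 e2 e3 e4 e5 e6
      have hQ0 : Q k ω ≠ 0 := (hQpos k ω).ne'
      have hx : (μ[(fun ω =>
          ∑ i ∈ range n, ∏ j ∈ range (i+1), (1 - Q (k+1+j) ω)) | 𝒢 k]) ω
          ≤ (Q k ω)⁻¹ - 1 := by
        rw [e3]; calc _ ≤ (μ[fun ω => (Q (k+1) ω)⁻¹ - 1 | 𝒢 k]) ω := e4
          _ = (μ[fun ω' => (Q (k+1) ω')⁻¹ | 𝒢 k]) ω - 1 := e5
          _ ≤ (Q k ω)⁻¹ - 1 := by linarith
      have e1' : (μ[(fun ω => (1 - Q k ω) *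
            (1 + ∑ i ∈ range n, ∏ j ∈ range (i+1), (1 - Q (k+1+j) ω))) | 𝒢 k]) ω
          = (1 - Q k ω) * ((μ[(fun ω =>
            (1 + ∑ i ∈ range n, ∏ j ∈ range (i+1), (1 - Q (k+1+j) ω))) | 𝒢 k]) ω) := by
        have := e1
        exact e1
      rw [e1']
      rw [e2]
      simp only [Pi.add_apply]
      set x := (μ[(fun ω =>
          ∑ i ∈ range n, ∏ j ∈ range (i+1), (1 - Q (k+1+j) ω)) | 𝒢 k]) ω with hxdef
      have hQnn : 0 ≤ 1 - Q k ω := by linarith [hQle k ω]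
      have hinv : Q k ω * (Q k ω)⁻¹ = 1 := mul_inv_cancel₀ hQ0
      nlinarith [mul_le_mul_of_nonneg_left hx hQnn]
  -- rewrite the `Icc` sum as a shifted `range` sum
  have hrw : (fun ω => ∑ i ∈ Finset.Icc 1 T, ∏ j ∈ Finset.Icc 1 i, (1 - Q j ω))
      = fun ω => ∑ i ∈ range T, ∏ j ∈ range (i+1), (1 - Q (1+j) ω) := by
    funext ω
    rw [← Finset.Ico_add_one_right_eq_Icc, Finset.sum_Ico_eq_sum_range]
    refine Finset.sum_congr rfl fun i _ => ?_
    rw [← Finset.Ico_add_one_right_eq_Icc, Finset.prod_Ico_eq_prod_range]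
    exact Finset.prod_congr (by first | rfl | (congr 1; omega)) fun j _ => rfl
  rw [hrw]
  -- assemble via tower property at `𝒢 1`
  have h1 : μ[(fun ω => ∑ i ∈ range T, ∏ j ∈ range (i+1), (1 - Q (1+j) ω)) | 𝒢₀]
      =ᵐ[μ] μ[μ[(fun ω => ∑ i ∈ range T, ∏ j ∈ range (i+1), (1 - Q (1+j) ω)) | 𝒢 1] | 𝒢₀] :=
    (condExp_condExp_of_le h𝒢₀ (𝒢.le 1)).symm
  have h2 : μ[μ[(fun ω => ∑ i ∈ range T, ∏ j ∈ range (i+1), (1 - Q (1+j) ω)) | 𝒢 1] | 𝒢₀]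
      ≤ᵐ[μ] μ[fun ω => (Q 1 ω)⁻¹ - 1 | 𝒢₀] :=
    condExp_mono integrable_condExp ((hsup.integrable 1).sub (integrable_const 1)) (key T 1)
  have h3 : μ[fun ω => (Q 1 ω)⁻¹ - 1 | 𝒢₀]
      =ᵐ[μ] fun ω => (μ[fun ω' => (Q 1 ω')⁻¹ | 𝒢₀]) ω - 1 := by
    refine (condExp_sub (μ := μ) (m := 𝒢₀) (hsup.integrable 1)
      (integrable_const (1:ℝ))).trans ?_
    rw [condExp_const (h𝒢₀.trans (𝒢.le 1)) (1:ℝ) (μ := μ)]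
    exact Filter.Eventually.of_forall fun ω => rfl
  filter_upwards [h1, h2, h3] with ω e1 e2 e3
  rw [e1]
  exact le_of_le_of_eq e2 e3
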